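/- Let p ∈ ℝ[t] be a univariate real polynomial. Then p(0) = 0 and p(τ) ≤ 0 for every τ ≤ 0 if and only if there exist polynomials σ₁, σ₂ ∈ ℝ[t], each a sum of squares of polynomials, such that p = t·σ₁ − t²·σ₂ (i.e., p ∈ t·(S − t·S), where S ⊂ ℝ[t] is the convex cone of sums of squares). -/

import Mathlib

open scoped BigOperators

/-- A univariate real polynomial is a sum of squares. -/
def IsSOSpoly (σ : Polynomial ℝ) : Prop :=
  ∃ (n : ℕ) (g : Fin n → Polynomial ℝ), σ = ∑ j, (g j) ^ 2

open Polynomial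

lemma sos_zero : IsSOSpoly 0 := ⟨0, ![], by simp⟩

lemma sos_sq (g : Polynomial ℝ) : IsSOSpoly (g ^ 2) := ⟨1, ![g], by simp⟩

lemma sos_add {a b : Polynomial ℝ} (ha : IsSOSpoly a) (hb : IsSOSpoly b) :
    IsSOSpoly (a + b) := by
  obtain ⟨n, g, rfl⟩ := ha
  obtain ⟨m, h, rfl⟩ := hb
  exact ⟨n + m, Fin.append g h, by rw [Fin.sum_univ_add]; simp⟩

lemma sos_mul {a b : Polynomial ℝ} (ha : IsSOSpoly a) (hb : IsSOSpoly b) :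
    IsSOSpoly (a * b) := by
  obtain ⟨n, g, rfl⟩ := ha
  obtain ⟨m, h, rfl⟩ := hb
  refine ⟨n * m, fun k => g (finProdFinEquiv.symm k).1 * h (finProdFinEquiv.symm k).2, ?_⟩
  rw [← Equiv.sum_comp (finProdFinEquiv : Fin n × Fin m ≃ Fin (n * m))]
  simp only [Equiv.symm_apply_apply]
  rw [Finset.sum_mul_sum, Fintype.sum_prod_type]
  simp [mul_pow]

lemma sos_C {c : ℝ} (hc : 0 ≤ c) : IsSOSpoly (C c) :=
  ⟨1, ![C (Real.sqrt c)], by simp [← C_pow, Real.sq_sqrt hc]⟩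

lemma sos_eval_nonneg {a : Polynomial ℝ} (ha : IsSOSpoly a) (t : ℝ) : 0 ≤ a.eval t := by
  obtain ⟨n, g, rfl⟩ := ha
  rw [eval_finset_sum]
  exact Finset.sum_nonneg fun j _ => by simp [sq_nonneg]

lemma sos_comp {a : Polynomial ℝ} (ha : IsSOSpoly a) (r : Polynomial ℝ) :
    IsSOSpoly (a.comp r) := by
  obtain ⟨n, g, rfl⟩ := ha
  refine ⟨n, fun j => (g j).comp r, ?_⟩
  simp only [Polynomial.comp, Polynomial.eval₂_finset_sum]
  exact Finset.sum_congr rfl fun j _ => pow_comp (g j) r 2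

lemma nonneg_closure_right (u : Polynomial ℝ) (a : ℝ) (h : ∀ t, a < t → 0 ≤ u.eval t) :
    0 ≤ u.eval a := by
  have hc : Filter.Tendsto (fun t => u.eval t) (nhdsWithin a (Set.Ioi a)) (nhds (u.eval a)) :=
    ((u.continuous).tendsto a).mono_left nhdsWithin_le_nhds
  exact ge_of_tendsto hc (Filter.eventually_of_mem self_mem_nhdsWithin fun t ht => h t ht)

lemma nonpos_closure_left (u : Polynomial ℝ) (a b : ℝ) (hba : b < a)
    (h : ∀ t, b < t → t < a → u.eval t ≤ 0) : u.eval a ≤ 0 := by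
  have hc : Filter.Tendsto (fun t => u.eval t) (nhdsWithin a (Set.Iio a)) (nhds (u.eval a)) :=
    ((u.continuous).tendsto a).mono_left nhdsWithin_le_nhds
  exact le_of_tendsto hc
    (Filter.eventually_of_mem (Ioo_mem_nhdsLT_of_mem ⟨hba, le_refl a⟩)
      fun t ht => h t ht.1 ht.2)

lemma cone_of_nonneg (n : ℕ) : ∀ q : Polynomial ℝ, q.natDegree ≤ n →
    (∀ t : ℝ, 0 ≤ t → 0 ≤ q.eval t) →
    ∃ σ τ : Polynomial ℝ, IsSOSpoly σ ∧ IsSOSpoly τ ∧ q = σ + X * τ := by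
  induction n with
  | zero =>
    intro q hdeg hq
    refine ⟨q, 0, ?_, sos_zero, by ring⟩
    rw [Polynomial.eq_C_of_natDegree_le_zero hdeg]
    exact sos_C (by rw [Polynomial.coeff_zero_eq_eval_zero]; exact hq 0 le_rfl)
  | succ n ih =>
    intro q hdeg hq
    by_cases hq0 : q = 0
    · exact ⟨0, 0, sos_zero, sos_zero, by simp [hq0]⟩
    by_cases hdeg0 : q.natDegree = 0
    · refine ⟨q, 0, ?_, sos_zero, by ring⟩
      rw [Polynomial.eq_C_of_natDegree_le_zero hdeg0.le]
      exact sos_C (by rw [Polynomial.coeff_zero_eq_eval_zero]; exact hq 0 le_rfl)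
    obtain ⟨z, hz⟩ : ∃ z : ℂ, (Polynomial.aeval z) q = 0 := by
      refine IsAlgClosed.exists_aeval_eq_zero ℂ q fun h => hdeg0 ?_
      exact Polynomial.natDegree_eq_zero_iff_degree_le_zero.mpr h.le
    by_cases him : z.im = 0
    · lift z to ℝ using him with r
      have hroot : q.IsRoot r := by
        erw [Polynomial.aeval_ofReal, RCLike.ofReal_eq_zero] at hz
        exact hz
      obtain ⟨u, hu⟩ := Polynomial.dvd_iff_isRoot.mpr hroot
      have hune : u ≠ 0 := fun h => hq0 (by simp [hu, h])
      have hudeg : u.natDegree ≤ n := by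
        have h1 : q.natDegree = 1 + u.natDegree := by
          rw [hu, Polynomial.natDegree_mul (Polynomial.X_sub_C_ne_zero r) hune,
            Polynomial.natDegree_X_sub_C]
        omega
      rcases le_or_gt r 0 with hr | hr
      · have hupos : ∀ t, 0 < t → 0 ≤ u.eval t := by
          intro t ht
          have h1 : 0 < t - r := by linarith
          have h2 : 0 ≤ (t - r) * u.eval t := by
            have h3 := hq t ht.le
            rw [hu] at h3; simpa using h3
          by_contra h
          push_neg at h
          nlinarith
        have hunn : ∀ t, 0 ≤ t → 0 ≤ u.eval t := by
          intro t ht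
          rcases ht.eq_or_lt with rfl | h
          · exact nonneg_closure_right u 0 fun s hs => hupos s hs
          · exact hupos t h
        obtain ⟨σ, τ, hσ, hτ, he⟩ := ih u hudeg hunn
        refine ⟨C (-r) * σ + X ^ 2 * τ, σ + C (-r) * τ,
          sos_add (sos_mul (sos_C (by linarith)) hσ) (sos_mul (sos_sq X) hτ),
          sos_add hσ (sos_mul (sos_C (by linarith)) hτ), ?_⟩
        rw [hu, he]
        simp only [map_neg]
        ring
      · have hneg : ∀ t, 0 < t → t < r → u.eval t ≤ 0 := by
          intro t ht htr
          have h2 : 0 ≤ (t - r) * u.eval t := by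
            have h3 := hq t ht.le
            rw [hu] at h3; simpa using h3
          by_contra h
          push_neg at h
          nlinarith
        have hposr : ∀ t, r < t → 0 ≤ u.eval t := by
          intro t ht
          have h2 : 0 ≤ (t - r) * u.eval t := by
            have h3 := hq t (by linarith)
            rw [hu] at h3; simpa using h3
          by_contra h
          push_neg at h
          nlinarith
        have hur0 : u.eval r = 0 :=
          le_antisymm (nonpos_closure_left u r 0 hr hneg) (nonneg_closure_right u r hposr)
        obtain ⟨v, hv⟩ := Polynomial.dvd_iff_isRoot.mpr hur0
        have hq2 : q = (X - C r) ^ 2 * v := by rw [hu, hv]; ring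
        have hvne : v ≠ 0 := fun h => hq0 (by simp [hq2, h])
        have hvdeg : v.natDegree ≤ n := by
          have hd2 : ((X - C r) ^ 2 : Polynomial ℝ).natDegree = 2 := by
            rw [Polynomial.natDegree_pow, Polynomial.natDegree_X_sub_C]
          have h1 : q.natDegree = 2 + v.natDegree := by
            rw [hq2, Polynomial.natDegree_mul (pow_ne_zero 2 (Polynomial.X_sub_C_ne_zero r))
              hvne, hd2]
          omega
        have hvne' : ∀ t, 0 ≤ t → t ≠ r → 0 ≤ v.eval t := by
          intro t ht htr
          have h1 : 0 < (t - r) ^ 2 := lt_of_le_of_ne (sq_nonneg _) (Ne.symm (pow_ne_zero 2 (sub_ne_zero.mpr htr)))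
          have h2 : 0 ≤ (t - r) ^ 2 * v.eval t := by
            have h3 := hq t ht
            rw [hq2] at h3; simpa using h3
          by_contra h
          push_neg at h
          nlinarith
        have hvnn : ∀ t, 0 ≤ t → 0 ≤ v.eval t := by
          intro t ht
          rcases eq_or_ne t r with rfl | hne
          · exact nonneg_closure_right v t fun s hs => hvne' s (by linarith) (by linarith)
          · exact hvne' t ht hne
        obtain ⟨σ, τ, hσ, hτ, he⟩ := ih v hvdeg hvnn
        exact ⟨(X - C r) ^ 2 * σ, (X - C r) ^ 2 * τ, sos_mul (sos_sq _) hσ,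
          sos_mul (sos_sq _) hτ, by rw [hq2, he]; ring⟩
    · obtain ⟨v, hv⟩ := q.quadratic_dvd_of_aeval_eq_zero_im_ne_zero hz him
      set Q : Polynomial ℝ := X ^ 2 - C (2 * z.re) * X + C (‖z‖ ^ 2) with hQdef
      have hnorm : ‖z‖ ^ 2 = z.re ^ 2 + z.im ^ 2 := by
        rw [Complex.sq_norm, Complex.normSq_apply]; ring
      have hQpos : ∀ t : ℝ, 0 < Q.eval t := by
        intro t
        have him2 : 0 < z.im ^ 2 := lt_of_le_of_ne (sq_nonneg _) (Ne.symm (pow_ne_zero 2 him))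
        simp only [hQdef, Polynomial.eval_add, Polynomial.eval_sub, Polynomial.eval_mul,
          Polynomial.eval_pow, Polynomial.eval_X, Polynomial.eval_C]
        nlinarith [sq_nonneg (t - z.re)]
      have hQsos : IsSOSpoly Q := by
        have hQ2 : Q = (X - C z.re) ^ 2 + (C z.im) ^ 2 := by
          rw [hQdef, hnorm]
          simp only [C_add, C_mul, map_pow, map_ofNat]
          ring
        rw [hQ2]; exact sos_add (sos_sq _) (sos_sq _)
      have hvne : v ≠ 0 := fun h => hq0 (by simp [hv, h])
      have hvdeg : v.natDegree ≤ n := by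
        have hQne : Q ≠ 0 := fun h => absurd (hQpos 0) (by simp [h])
        have hQdeg2 : Q.natDegree = 2 := by rw [hQdef]; compute_degree!
        have h1 : q.natDegree = 2 + v.natDegree := by
          rw [hv, Polynomial.natDegree_mul hQne hvne, hQdeg2]
        omega
      have hvnn : ∀ t, 0 ≤ t → 0 ≤ v.eval t := by
        intro t ht
        have h2 := hq t ht
        rw [hv, Polynomial.eval_mul] at h2
        by_contra h
        push_neg at h
        nlinarith [hQpos t]
      obtain ⟨σ, τ, hσ, hτ, he⟩ := ih v hvdeg hvnn
      exact ⟨Q * σ, Q * τ, sos_mul hQsos hσ, sos_mul hQsos hτ, by rw [hv, he]; ring⟩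

lemma sos_zero_root {σ : Polynomial ℝ} (h : IsSOSpoly σ) (h0 : σ.eval 0 = 0) :
    ∃ σ₂ : Polynomial ℝ, IsSOSpoly σ₂ ∧ σ = X ^ 2 * σ₂ := by
  obtain ⟨n, g, rfl⟩ := h
  have hg0 : ∀ j, (g j).eval 0 = 0 := by
    have hs : ∑ j, ((g j).eval 0) ^ 2 = 0 := by
      rw [eval_finset_sum] at h0
      simpa using h0
    intro j
    have := (Finset.sum_eq_zero_iff_of_nonneg fun j _ => sq_nonneg ((g j).eval 0)).mp hs j
      (Finset.mem_univ j)
    exact pow_eq_zero_iff (two_ne_zero) |>.mp this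
  have hdvd : ∀ j, ∃ h : Polynomial ℝ, g j = X * h := by
    intro j
    obtain ⟨h, hh⟩ := (Polynomial.dvd_iff_isRoot.mpr (hg0 j) : (X - C 0) ∣ g j)
    exact ⟨h, by simpa using hh⟩
  choose h hh using hdvd
  refine ⟨∑ j, (h j) ^ 2, ⟨n, h, rfl⟩, ?_⟩
  rw [Finset.mul_sum]
  refine Finset.sum_congr rfl fun j _ => ?_
  rw [hh j]; ring

/-- For `p ∈ ℝ[t]`: `p(0) = 0` and `p ≤ 0` on `(-∞, 0]` iff `p = t σ₁ - t² σ₂` for sums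
of squares `σ₁, σ₂ ∈ ℝ[t]`, i.e. `p ∈ t (S - t S)`. -/
theorem nonpos_on_nonpos_iff (p : Polynomial ℝ) :
    (p.eval 0 = 0 ∧ ∀ τ : ℝ, τ ≤ 0 → p.eval τ ≤ 0) ↔
      ∃ σ₁ σ₂ : Polynomial ℝ, IsSOSpoly σ₁ ∧ IsSOSpoly σ₂ ∧
        p = Polynomial.X * σ₁ - Polynomial.X ^ 2 * σ₂ := by
  constructor
  · rintro ⟨h0, hneg⟩
    set q : Polynomial ℝ := -(p.comp (-X)) with hqdef
    have hqeval : ∀ t : ℝ, q.eval t = -(p.eval (-t)) := by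
      intro t; simp [hqdef]
    have hqnn : ∀ t : ℝ, 0 ≤ t → 0 ≤ q.eval t := by
      intro t ht
      rw [hqeval]
      have := hneg (-t) (by linarith)
      linarith
    obtain ⟨σ, τ, hσ, hτ, he⟩ := cone_of_nonneg q.natDegree q le_rfl hqnn
    have hσ0 : σ.eval 0 = 0 := by
      have h1 : q.eval 0 = 0 := by rw [hqeval]; simp [h0]
      rw [he] at h1
      simpa using h1
    obtain ⟨σ₂, hσ₂, hσeq⟩ := sos_zero_root hσ hσ0
    have hpq : p = -(q.comp (-X)) := by
      rw [hqdef, neg_comp, neg_neg, Polynomial.comp_assoc]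
      simp
    refine ⟨τ.comp (-X), σ₂.comp (-X), sos_comp hτ _, sos_comp hσ₂ _, ?_⟩
    rw [hpq, he, hσeq]
    simp only [add_comp, mul_comp, pow_comp, X_comp]
    ring
  · rintro ⟨σ₁, σ₂, h1, h2, rfl⟩
    constructor
    · simp
    · intro τ hτ
      have e1 := sos_eval_nonneg h1 τ
      have e2 := sos_eval_nonneg h2 τ
      simp only [Polynomial.eval_sub, Polynomial.eval_mul, Polynomial.eval_pow,
        Polynomial.eval_X]
      nlinarith
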